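/- Near-perfect fairness is reachable by flipping privileged-group positives: if the dataset's Statistical Parity Difference is nonnegative, i.e., Pos(A)/|A| − Pos(B)/|B| ≥ 0, then there exists an integer k with 0 ≤ k ≤ Pos(A) and a classifier h (obtained from the perfect classifier by predicting the unfavourable class on exactly k true-positive instances of A) such that |SPD(h)| ≤ 1/(2·|A|). In words: along the path of flips from the perfect classifier, perfect fairness for SPD is approached to within half a step size before the flips in A are exhausted. -/

import Mathlib

open Finset

variable {α : Type*} [DecidableEq α]

/-- Number of instances in `S` whose true label is the favourable class `+`. -/
def PosCount (y : α → Bool) (S : Finset α) : ℕ := (S.filter fun x => y x = true).card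

/-- Number of instances in `S` whose true label is the unfavourable class `−`. -/
def NegCount (y : α → Bool) (S : Finset α) : ℕ := (S.filter fun x => y x = false).card

/-- Predicted favourable rate of classifier `h` on `S`. -/
noncomputable def pPlus (h : α → Bool) (S : Finset α) : ℝ :=
  (S.filter fun x => h x = true).card / S.card

/-- Predicted unfavourable rate of classifier `h` on `S`. -/
noncomputable def pMinus (h : α → Bool) (S : Finset α) : ℝ :=
  (S.filter fun x => h x = false).card / S.card

/-- Accuracy of classifier `h` on dataset `D` with ground truth `y`. -/
noncomputable def Accuracy (y : α → Bool) (D : Finset α) (h : α → Bool) : ℝ :=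
  (D.filter fun x => h x = y x).card / D.card

/-- Statistical Parity Difference of classifier `h`, privileged group `A`,
unprivileged group `D \ A`. -/
noncomputable def SPD (D A : Finset α) (h : α → Bool) : ℝ :=
  pPlus h A - pPlus h (D \ A)

/-- if the dataset SPD is nonnegative, then flipping some number
`k ≤ PosCount(A)` of true positives of `A` to the unfavourable class, starting from
the perfect classifier, yields a classifier whose SPD is within half a step
size `1/(2|A|)` of perfect fairness. -/
theorem near_perfect_fairness_reachable (D A : Finset α) (y : α → Bool)
    (hSub : A ⊆ D) (hD : D.Nonempty) (hA : A.Nonempty) (hB : (D \ A).Nonempty)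
    (hpos : 0 ≤ (PosCount y A : ℝ) / A.card - (PosCount y (D \ A) : ℝ) / (D \ A).card) :
    ∃ (k : ℕ) (h : α → Bool) (K : Finset α),
      k ≤ PosCount y A ∧
      K ⊆ A.filter (fun x => y x = true) ∧ K.card = k ∧
      (∀ x ∈ K, h x = false) ∧ (∀ x, x ∉ K → h x = y x) ∧
      |SPD D A h| ≤ 1 / (2 * A.card) := by
  classical
  have haC : (0:ℝ) < A.card := by exact_mod_cast hA.card_pos
  have hbC : (0:ℝ) < (D \ A).card := by exact_mod_cast hB.card_pos
  set P := PosCount y A with hP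
  set q : ℝ := (PosCount y (D \ A) : ℝ) / (D \ A).card with hq
  have hq0 : 0 ≤ q := by positivity
  set r : ℝ := (P:ℝ) - A.card * q with hr
  have h3 : ((P:ℝ)/A.card - q) * A.card = (P:ℝ) - A.card * q := by
    rw [sub_mul, div_mul_cancel₀ _ haC.ne']; ring
  have hr0 : 0 ≤ r := by
    have h2 : 0 ≤ ((P:ℝ) / A.card - q) * A.card := mul_nonneg hpos haC.le
    rw [hr]; linarith [h3 ▸ h2]
  have hrP : r ≤ (P:ℝ) := by
    have := mul_nonneg haC.le hq0
    rw [hr]; linarith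
  have hfl : (0:ℤ) ≤ ⌊r + 1/2⌋ := Int.floor_nonneg.mpr (by linarith)
  set k : ℕ := ⌊r + 1/2⌋.toNat with hk
  have hkcast : (k:ℝ) = (⌊r + 1/2⌋ : ℤ) := by
    rw [hk]; exact_mod_cast Int.toNat_of_nonneg hfl
  have hk1 : (k:ℝ) ≤ r + 1/2 := by rw [hkcast]; exact Int.floor_le _
  have hk2 : r + 1/2 < (k:ℝ) + 1 := by rw [hkcast]; exact Int.lt_floor_add_one _
  have hkP : k ≤ P := by
    have : (k:ℝ) < (P:ℝ) + 1 := by linarith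
    exact_mod_cast Nat.lt_add_one_iff.mp (by exact_mod_cast this)
  obtain ⟨K, hKsub, hKcard⟩ :=
    Finset.exists_subset_card_eq (s := A.filter fun x => y x = true) (n := k) (by
      simpa [hP, PosCount] using hkP)
  refine ⟨k, fun x => if x ∈ K then false else y x, K, hkP, hKsub, hKcard,
    fun x hx => by simp [hx], fun x hx => by simp [hx], ?_⟩
  have hKA : K ⊆ A := hKsub.trans (Finset.filter_subset _ _)
  have hfA : A.filter (fun x => (if x ∈ K then false else y x) = true)
      = (A.filter fun x => y x = true) \ K := by
    ext x
    by_cases hx : x ∈ K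
    · simp [hx, hKsub hx, Finset.mem_filter.mp (hKsub hx)]
    · simp [hx]
  have hfB : (D \ A).filter (fun x => (if x ∈ K then false else y x) = true)
      = (D \ A).filter (fun x => y x = true) := by
    apply Finset.filter_congr
    intro x hx
    have : x ∉ K := fun hxK => (Finset.mem_sdiff.mp hx).2 (hKA hxK)
    simp [this]
  have hcardA : ((A.filter fun x => y x = true) \ K).card = P - k := by
    rw [Finset.card_sdiff_of_subset hKsub, hKcard]; rfl
  have hSPD : SPD D A (fun x => if x ∈ K then false else y x)
      = ((P:ℝ) - k) / A.card - q := by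
    rw [SPD, pPlus, pPlus, hfA, hfB, hcardA]
    rw [Nat.cast_sub hkP]
    rfl
  rw [hSPD]
  have habs : |r - k| ≤ 1/2 := abs_le.mpr ⟨by linarith, by linarith⟩
  have heq : ((P:ℝ) - k) / A.card - q = (r - k) / A.card := by
    rw [hr, sub_div, sub_div, sub_div, mul_div_cancel_left₀ _ haC.ne']
    ring
  rw [heq, abs_div, abs_of_pos haC]
  have h2a : (0:ℝ) < 2 * A.card := by linarith
  rw [div_le_div_iff₀ haC h2a]
  have hmul := mul_le_mul_of_nonneg_right habs h2a.le
  linarith
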